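/- arXiv:1702.01866 — 2 statements merged into one kernel-verified Lean document; each statement's English description precedes it below -/
import Mathlib

section
/- Fix integers d ≥ 2, ℓ ≥ 2 and n ≥ 1, and set N = (d−1)ℓ + 2. The following are equivalent: (1) there exist a (d+1)-angulation 𝒯 of P_N and a (d+1)-angle G of 𝒯 such that ρ^{n(d−1)}(𝒯) = 𝒯 and ρ^{n(d−1)}(G) = G; (2) N divides n·gcd(d+1, 2(ℓ−1)). -/
/-- `z` lies strictly inside the open clockwise cyclic arc from `a` to `b` in `ℤ/Nℤ`. -/
def InArc (N : ℕ) (a b z : ZMod N) : Prop :=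
  0 < (z - a).val ∧ (z - a).val < (b - a).val

/-- `{x, y}` is a `(d−1)`-diagonal of the `N`-gon: the representative
`m ∈ {1, …, N−1}` of `y − x` satisfies `2 ≤ m ≤ N−2` and `m ≡ 1 (mod d−1)`. -/
def IsDiag (d N : ℕ) (p : Sym2 (ZMod N)) : Prop :=
  ∃ x y : ZMod N, p = s(x, y) ∧
    2 ≤ (y - x).val ∧ (y - x).val ≤ N - 2 ∧ (d - 1) ∣ ((y - x).val - 1)

/-- Two diagonals cross: the endpoints of one separate the endpoints of the other,
i.e. one endpoint lies strictly inside one open arc determined by the other diagonal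
and the other endpoint lies strictly inside the other open arc. -/
def Crosses (N : ℕ) (p q : Sym2 (ZMod N)) : Prop :=
  ∃ a b c e : ZMod N, p = s(a, b) ∧ q = s(c, e) ∧ InArc N a b c ∧ InArc N b a e

/-- A `(d+1)`-angulation of the `N`-gon: a maximal set of pairwise non-crossing
`(d−1)`-diagonals. -/
def IsAngulation (d N : ℕ) (T : Set (Sym2 (ZMod N))) : Prop :=
  (∀ p ∈ T, IsDiag d N p) ∧ (∀ p ∈ T, ∀ q ∈ T, ¬ Crosses N p q) ∧
    ∀ S : Set (Sym2 (ZMod N)), (∀ p ∈ S, IsDiag d N p) →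
      (∀ p ∈ S, ∀ q ∈ S, ¬ Crosses N p q) → T ⊆ S → S = T

/-- The `k`-th power of the rotation `ρ` (one step anticlockwise, `x ↦ x − 1`),
acting on unordered pairs. -/
def rot (N k : ℕ) (p : Sym2 (ZMod N)) : Sym2 (ZMod N) :=
  Sym2.map (fun x => x - (k : ZMod N)) p

/-- `G` is a `(d+1)`-angle of the partial `(d+1)`-angulation `T`: `G` is a set of
`d+1` corners such that each pair of cyclically consecutive elements of `G` is either
at cyclic distance `1` (an outer edge) or forms a `(d−1)`-diagonal belonging to `T`. -/
def IsAngle (d N : ℕ) (T : Set (Sym2 (ZMod N))) (G : Finset (ZMod N)) : Prop :=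
  G.card = d + 1 ∧
    ∀ x y : ZMod N, x ∈ G → y ∈ G → x ≠ y → (∀ z ∈ G, ¬ InArc N x y z) →
      ((y - x).val = 1 ∨ s(x, y) ∈ T)

section Toolkit
variable {N : ℕ} [NeZero N]

lemma Npos : 0 < N := Nat.pos_of_ne_zero (NeZero.ne N)

lemma val_inj {x y : ZMod N} (h : x.val = y.val) : x = y := ZMod.val_injective N h

lemma cast_val (x : ZMod N) : ((x.val : ℕ) : ZMod N) = x := by
  apply val_inj; rw [ZMod.val_cast_of_lt (ZMod.val_lt x)]

lemma sub_cast {i j : ℕ} (hi : i ≤ N) :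
    (j : ZMod N) - (i : ZMod N) = ((j + (N - i) : ℕ) : ZMod N) := by
  push_cast [Nat.cast_sub hi]
  simp [ZMod.natCast_self]
  ring

lemma val_sub_le {x y : ZMod N} (h : y.val ≤ x.val) : (x - y).val = x.val - y.val := by
  have : x - y = ((x.val - y.val : ℕ) : ZMod N) := by
    rw [Nat.cast_sub h, cast_val, cast_val]
  rw [this, ZMod.val_cast_of_lt (lt_of_le_of_lt (Nat.sub_le _ _) (ZMod.val_lt x))]

lemma val_sub_gt {x y : ZMod N} (h : x.val < y.val) : (x - y).val = x.val + N - y.val := by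
  have hyN := ZMod.val_lt y
  have : x - y = ((x.val + N - y.val : ℕ) : ZMod N) := by
    have h1 : y.val ≤ x.val + N := by omega
    rw [Nat.cast_sub h1, cast_val]
    push_cast
    simp [ZMod.natCast_self]
    try ring
  rw [this, ZMod.val_cast_of_lt (by omega)]

lemma val_sub_zero_iff {x y : ZMod N} : (x - y).val = 0 ↔ x = y := by
  constructor
  · intro h
    have : x - y = 0 := by
      have := cast_val (x - y); rw [h] at this; simpa using this.symm
    linear_combination (norm := abel) this
  · intro h; simp [h]

lemma not_crosses_of_shared {p q : Sym2 (ZMod N)} (v : ZMod N) (hv : v ∈ p) (hw : v ∈ q) :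
    ¬ Crosses N p q := by
  rintro ⟨a, b, c, e, hp, hq, h1, h2⟩
  subst hp; subst hq
  rw [Sym2.mem_iff] at hv hw
  have z1 : ∀ u w : ZMod N, ¬ InArc N u w u := by rintro u w ⟨h0, _⟩; simp at h0
  have z2 : ∀ u w : ZMod N, ¬ InArc N u w w := by rintro u w ⟨_, hlt⟩; exact lt_irrefl _ hlt
  rcases hv with h | h <;> rcases hw with h' | h'
  · rw [h'.symm.trans h] at h1; exact z1 _ _ h1
  · rw [h'.symm.trans h] at h2; exact z2 _ _ h2
  · rw [h'.symm.trans h] at h1; exact z2 _ _ h1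
  · rw [h'.symm.trans h] at h2; exact z1 _ _ h2

lemma not_crosses_of_outside {A B c e : ZMod N}
    (hc : ¬ InArc N A B c) (he : ¬ InArc N A B e) : ¬ Crosses N s(A, B) s(c, e) := by
  rintro ⟨a, b, c', e', hp, hq, h1, h2⟩
  rw [Sym2.eq_iff] at hp hq
  rcases hp with ⟨rfl, rfl⟩ | ⟨rfl, rfl⟩
  · rcases hq with ⟨rfl, rfl⟩ | ⟨rfl, rfl⟩
    · exact hc h1
    · exact he h1
  · rcases hq with ⟨rfl, rfl⟩ | ⟨rfl, rfl⟩
    · exact he h2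
    · exact hc h2

lemma crosses_of {A B z w : ZMod N} (h1 : InArc N A B z) (h2 : InArc N B A w) :
    Crosses N s(A, B) s(z, w) := ⟨A, B, z, w, rfl, rfl, h1, h2⟩

lemma crosses_of' {A B z w : ZMod N} (h1 : InArc N A B z) (h2 : InArc N B A w) :
    Crosses N s(A, B) s(w, z) := ⟨A, B, z, w, rfl, Sym2.eq_swap, h1, h2⟩

end Toolkit

section NT
/-- Number-theoretic core. -/
lemma NT_iff (d ℓ n N : ℕ) (hd : 2 ≤ d) (hl : 2 ≤ ℓ) (hN : N = (d - 1) * ℓ + 2) :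
    (N ∣ n * (d - 1) * (ℓ - 1)) ↔ N ∣ n * Nat.gcd (d + 1) (2 * (ℓ - 1)) := by
  obtain ⟨a, rfl⟩ : ∃ a, d = a + 2 := ⟨d - 2, by omega⟩
  obtain ⟨L, rfl⟩ : ∃ L, ℓ = L + 1 := ⟨ℓ - 1, by omega⟩
  have ha1 : a + 2 - 1 = a + 1 := by omega
  have hN' : N = (a+1) * L + (a + 3) := by rw [hN, ha1]; ring
  have hd1 : a + 2 - 1 = a + 1 := by omega
  have hl1 : L + 1 - 1 = L := by omega
  rw [hd1, hl1]
  have key : (N ∣ n * (a+1) * L ↔ N ∣ n * (a + 3)) := by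
    constructor
    · intro h
      have : (N:ℤ) ∣ (n * (a+1) * L : ℕ) := Int.natCast_dvd_natCast.mpr h
      have h2 : (N:ℤ) ∣ n * (a + 3) := by
        have : (n * (a + 3) : ℤ) = n * N - (n * (a+1) * L : ℕ) := by push_cast [hN']; ring
        rw [this]
        exact dvd_sub ((dvd_refl (N:ℤ)).mul_left n) ‹_›
      exact_mod_cast h2
    · intro h
      have : (N:ℤ) ∣ (n * (a + 3) : ℕ) := Int.natCast_dvd_natCast.mpr h
      have h2 : (N:ℤ) ∣ n * (a+1) * L := by
        have : (n * (a+1) * L : ℤ) = n * N - (n * (a + 3) : ℕ) := by push_cast [hN']; ring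
        rw [this]
        exact dvd_sub ((dvd_refl (N:ℤ)).mul_left n) ‹_›
      exact_mod_cast h2
  constructor
  · intro h
    have h1 : N ∣ n * (a + 3) := key.mp h
    have h2 : N ∣ n * (2 * L) := by
      have hz : (N:ℤ) ∣ (n * (a+1) * L : ℕ) := Int.natCast_dvd_natCast.mpr h
      have h3 : (N:ℤ) ∣ n * (2 * L) := by
        have he : (n * (2 * L) : ℤ) = n * L * N - (L+1) * (n * (a+1) * L : ℕ) := by
          push_cast [hN']; ring
        rw [he]
        exact dvd_sub ((dvd_refl (N:ℤ)).mul_left (n*L)) (Dvd.dvd.mul_left hz (L+1))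
      exact_mod_cast h3
    have : N ∣ Nat.gcd (n * (a + 3)) (n * (2 * L)) := Nat.dvd_gcd h1 h2
    rwa [Nat.gcd_mul_left] at this
  · intro h
    apply key.mpr
    calc N ∣ n * Nat.gcd (a + 3) (2 * L) := h
    _ ∣ n * (a + 3) := Nat.mul_dvd_mul_left n (Nat.gcd_dvd_left _ _)

end NT

section Gaps
variable {N : ℕ} [NeZero N]

/-- Cyclic gap from `x` to the next element of `G` (clockwise). -/
noncomputable def gapOf (G : Finset (ZMod N)) (x : ZMod N) : ℕ :=
  sInf {m : ℕ | 0 < m ∧ x + (m : ZMod N) ∈ G}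

noncomputable def succOf (G : Finset (ZMod N)) (x : ZMod N) : ZMod N :=
  x + ((gapOf G x : ℕ) : ZMod N)

variable {G : Finset (ZMod N)}

lemma gap_set_nonempty (hG : 2 ≤ G.card) (x : ZMod N) :
    {m : ℕ | 0 < m ∧ x + (m : ZMod N) ∈ G}.Nonempty := by
  obtain ⟨y, hy, hyx⟩ := Finset.exists_mem_ne (show 1 < G.card by omega) x
  refine ⟨(y - x).val, ?_, ?_⟩
  · have : (y - x).val ≠ 0 := fun h => hyx (by
      have := val_sub_zero_iff.mp h; exact this)
    omega
  · rw [cast_val]; simpa using hy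

lemma gap_mem (hG : 2 ≤ G.card) (x : ZMod N) :
    0 < gapOf G x ∧ x + ((gapOf G x : ℕ) : ZMod N) ∈ G :=
  Nat.sInf_mem (gap_set_nonempty hG x)

lemma gap_pos (hG : 2 ≤ G.card) (x : ZMod N) : 0 < gapOf G x := (gap_mem hG x).1

lemma succ_mem (hG : 2 ≤ G.card) (x : ZMod N) : succOf G x ∈ G := (gap_mem hG x).2

lemma gap_le (hG : 2 ≤ G.card) {x y : ZMod N} (hy : y ∈ G) (hxy : y ≠ x) :
    gapOf G x ≤ (y - x).val := by
  apply Nat.sInf_le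
  refine ⟨?_, by rw [cast_val]; simpa using hy⟩
  have : (y - x).val ≠ 0 := fun h => hxy (val_sub_zero_iff.mp h)
  omega

lemma gap_lt (hG : 2 ≤ G.card) (x : ZMod N) : gapOf G x < N := by
  obtain ⟨y, hy, hyx⟩ := Finset.exists_mem_ne (show 1 < G.card by omega) x
  exact lt_of_le_of_lt (gap_le hG hy hyx) (ZMod.val_lt _)

lemma succ_sub_val (hG : 2 ≤ G.card) (x : ZMod N) :
    (succOf G x - x).val = gapOf G x := by
  rw [succOf, add_sub_cancel_left, ZMod.val_cast_of_lt (gap_lt hG x)]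

lemma succ_ne (hG : 2 ≤ G.card) (x : ZMod N) : succOf G x ≠ x := by
  intro h
  have h0 : (succOf G x - x).val = 0 := by rw [h, sub_self, ZMod.val_zero]
  rw [succ_sub_val hG] at h0
  have := gap_pos hG x
  omega

lemma arc_empty (hG : 2 ≤ G.card) (x : ZMod N) {z : ZMod N} (hz : z ∈ G) :
    ¬ InArc N x (succOf G x) z := by
  rintro ⟨h1, h2⟩
  rw [succ_sub_val hG] at h2
  have hzx : z ≠ x := by
    intro h; rw [h, sub_self, ZMod.val_zero] at h1; exact lt_irrefl _ h1
  exact absurd (gap_le hG hz hzx) (not_le.mpr h2)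

lemma sum_gaps (hG : 2 ≤ G.card) : ∑ x ∈ G, gapOf G x = N := by
  classical
  set I : ZMod N → Finset (ZMod N) :=
    fun x => Finset.univ.filter (fun z => InArc N x (succOf G x) z) with hI
  have hIcard : ∀ x, (I x).card = gapOf G x - 1 := by
    intro x
    have himg : I x = (Finset.Ioo 0 (gapOf G x)).image (fun m : ℕ => x + (m : ZMod N)) := by
      ext z
      simp only [hI, Finset.mem_filter, Finset.mem_univ, true_and, Finset.mem_image,
        Finset.mem_Ioo, InArc, succ_sub_val hG]
      constructor
      · rintro ⟨h1, h2⟩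
        exact ⟨(z - x).val, ⟨h1, h2⟩, by rw [cast_val]; ring⟩
      · rintro ⟨m, ⟨hm1, hm2⟩, rfl⟩
        have : (x + (m : ZMod N) - x).val = m := by
          rw [add_sub_cancel_left, ZMod.val_cast_of_lt (lt_trans hm2 (gap_lt hG x))]
        rw [this]; exact ⟨hm1, hm2⟩
    rw [himg, Finset.card_image_of_injOn, Nat.card_Ioo]
    · omega
    · intro m1 hm1 m2 hm2 h
      simp only [Finset.coe_Ioo, Set.mem_Ioo] at hm1 hm2
      have h1 : m1 < N := lt_trans hm1.2 (gap_lt hG x)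
      have h2 : m2 < N := lt_trans hm2.2 (gap_lt hG x)
      have : ((m1 : ℕ) : ZMod N) = ((m2 : ℕ) : ZMod N) := by
        have := add_left_cancel h; exact this
      have := congrArg ZMod.val this
      rwa [ZMod.val_cast_of_lt h1, ZMod.val_cast_of_lt h2] at this
  have hdisj : ∀ x ∈ G, ∀ x' ∈ G, x ≠ x' → Disjoint (I x) (I x') := by
    intro x hx x' hx' hne
    rw [Finset.disjoint_left]
    intro z hz hz'
    simp only [hI, Finset.mem_filter, Finset.mem_univ, true_and, InArc,
      succ_sub_val hG] at hz hz'
    have hBA : gapOf G x ≤ (x' - x).val := gap_le hG hx' (Ne.symm hne)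
    have hBlt : (z - x).val < (x' - x).val := lt_of_lt_of_le hz.2 hBA
    have hzx' : (z - x').val = (z - x).val + N - (x' - x).val := by
      have : z - x' = (z - x) - (x' - x) := by ring
      rw [this, val_sub_gt hBlt]
    have hxx' : (x - x').val = N - (x' - x).val := by
      have : x - x' = 0 - (x' - x) := by ring
      have hpos : (0 : ZMod N).val < (x' - x).val := by
        rw [ZMod.val_zero]
        have : (x' - x).val ≠ 0 := fun h => hne (val_sub_zero_iff.mp h).symm
        omega
      rw [this, val_sub_gt hpos, ZMod.val_zero]
      omega
    have hlt : (x' - x).val < N := ZMod.val_lt _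
    refine arc_empty hG x' hx ⟨?_, ?_⟩
    · rw [hxx']; omega
    · rw [succ_sub_val hG]
      have : (x - x').val < (z - x').val := by rw [hxx', hzx']; omega
      exact lt_trans this hz'.2
  have hcover : G.biUnion I = Finset.univ \ G := by
    ext z
    simp only [Finset.mem_biUnion, Finset.mem_sdiff, Finset.mem_univ, true_and]
    constructor
    · rintro ⟨x, hx, hz⟩
      simp only [hI, Finset.mem_filter, Finset.mem_univ, true_and] at hz
      intro hzG
      exact arc_empty hG x hzG hz
    · intro hzG
      have hGne : G.Nonempty := Finset.card_pos.mp (by omega)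
      obtain ⟨x, hx, hmin⟩ := Finset.exists_min_image G (fun y => (z - y).val) hGne
      refine ⟨x, hx, ?_⟩
      simp only [hI, Finset.mem_filter, Finset.mem_univ, true_and, InArc, succ_sub_val hG]
      have hzx : 0 < (z - x).val := by
        have : (z - x).val ≠ 0 := fun h => hzG (val_sub_zero_iff.mp h ▸ hx)
        omega
      refine ⟨hzx, ?_⟩
      by_contra hge
      push_neg at hge
      rcases Nat.lt_or_ge (gapOf G x) ((z - x).val) with hlt | hge2
      · have hsv : (succOf G x - x).val = gapOf G x := succ_sub_val hG x
        have : (z - succOf G x).val = (z - x).val - gapOf G x := by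
          have he : z - succOf G x = (z - x) - (succOf G x - x) := by ring
          rw [he, val_sub_le (by rw [hsv]; omega), hsv]
        have hmin' := hmin _ (succ_mem hG x)
        rw [this] at hmin'
        have := gap_pos hG x
        omega
      · have heq : gapOf G x = (z - x).val := by omega
        have : succOf G x = z := by
          rw [succOf, heq, cast_val]; ring
        exact hzG (this ▸ succ_mem hG x)
  have hcards : ∑ x ∈ G, (I x).card = N - G.card := by
    rw [← Finset.card_biUnion hdisj, hcover, Finset.card_sdiff_of_subset (Finset.subset_univ G),
      Finset.card_univ, ZMod.card]
  have hNG : G.card ≤ N := by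
    have := Finset.card_le_univ G
    rwa [ZMod.card] at this
  have : ∑ x ∈ G, gapOf G x = ∑ x ∈ G, ((I x).card + 1) := by
    apply Finset.sum_congr rfl
    intro x hx
    rw [hIcard]
    have := gap_pos hG x
    omega
  rw [this, Finset.sum_add_distrib, hcards, Finset.sum_const, smul_eq_mul, mul_one]
  omega

end Gaps

section Orbit

lemma nsmul_mod_orderOf {M : Type*} [AddGroup M] (k : M) (m : ℕ) :
    m • k = (m % addOrderOf k) • k := by
  conv_lhs => rw [← Nat.div_add_mod m (addOrderOf k)]
  rw [add_nsmul, mul_nsmul k (addOrderOf k) (m / addOrderOf k), addOrderOf_nsmul_eq_zero,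
    smul_zero, zero_add]

lemma orbit_sum {N : ℕ} [NeZero N] (k : ZMod N) (q : ZMod N → ℕ)
    (hq : ∀ x, q (x - k) = q x) (S : Finset (ZMod N)) (hS : ∀ x ∈ S, x - k ∈ S) :
    addOrderOf k ∣ ∑ x ∈ S, q x := by
  classical
  set r := addOrderOf k with hr
  have hrpos : 0 < r := addOrderOf_pos k
  revert hS
  induction S using Finset.strongInduction with
  | _ S ih =>
    intro hS
    rcases S.eq_empty_or_nonempty with rfl | ⟨x, hx⟩
    · simp
    · have hiter : ∀ m : ℕ, x - m • k ∈ S := by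
        intro m
        induction m with
        | zero => simpa using hx
        | succ m ihm =>
          have : x - (m + 1) • k = (x - m • k) - k := by
            rw [add_nsmul, one_nsmul]; ring
          rw [this]; exact hS _ ihm
      have hqiter : ∀ m : ℕ, q (x - m • k) = q x := by
        intro m
        induction m with
        | zero => simp
        | succ m ihm =>
          have : x - (m + 1) • k = (x - m • k) - k := by
            rw [add_nsmul, one_nsmul]; ring
          rw [this, hq, ihm]
      set O : Finset (ZMod N) := (Finset.range r).image (fun m => x - m • k) with hO
      have aux : ∀ m1 m2 : ℕ, m1 ≤ m2 → m2 < r → m1 • k = m2 • k → m1 = m2 := by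
        intro m1 m2 hle hlt heq
        have h1 : (m2 - m1 + m1) • k = (m2 - m1) • k + m1 • k := add_nsmul k _ _
        rw [Nat.sub_add_cancel hle, ← heq] at h1
        have h0 : (m2 - m1) • k = 0 := (right_eq_add.mp h1)
        have hdvd : r ∣ (m2 - m1) := addOrderOf_dvd_iff_nsmul_eq_zero.mpr h0
        rcases Nat.eq_zero_or_pos (m2 - m1) with h | h
        · omega
        · exact absurd (Nat.le_of_dvd h hdvd) (by omega)
      have hinj : ∀ m1 ∈ Finset.range r, ∀ m2 ∈ Finset.range r,
          x - m1 • k = x - m2 • k → m1 = m2 := by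
        intro m1 hm1 m2 hm2 heq
        simp only [Finset.mem_range] at hm1 hm2
        have heq' : m1 • k = m2 • k := by
          have := sub_right_injective heq; exact this
        rcases le_total m1 m2 with h | h
        · exact aux _ _ h hm2 heq'
        · exact (aux _ _ h hm1 heq'.symm).symm
      have hxO : x ∈ O := by
        rw [hO]
        refine Finset.mem_image.mpr ⟨0, Finset.mem_range.mpr hrpos, by simp⟩
      have hOsub : O ⊆ S := by
        intro z hz
        rw [hO] at hz
        obtain ⟨m, _, rfl⟩ := Finset.mem_image.mp hz
        exact hiter m
      have hsmulmod : ∀ m : ℕ, m • k = (m % r) • k := fun m => nsmul_mod_orderOf k m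
      have hS' : ∀ z ∈ S \ O, z - k ∈ S \ O := by
        intro z hz
        rw [Finset.mem_sdiff] at hz ⊢
        refine ⟨hS _ hz.1, ?_⟩
        intro hzk
        apply hz.2
        rw [hO] at hzk ⊢
        obtain ⟨m, hm, hzm⟩ := Finset.mem_image.mp hzk
        rw [Finset.mem_range] at hm
        refine Finset.mem_image.mpr ⟨(m + r - 1) % r, Finset.mem_range.mpr (Nat.mod_lt _ hrpos), ?_⟩
        have hm1 : (r - 1) • k = -k := by
          apply eq_neg_of_add_eq_zero_left
          have h2 : (r - 1) • k + k = r • k := by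
            calc (r - 1) • k + k = (r - 1) • k + 1 • k := by rw [one_nsmul]
            _ = (r - 1 + 1) • k := (add_nsmul k _ _).symm
            _ = r • k := by rw [Nat.sub_add_cancel hrpos]
          rw [h2, addOrderOf_nsmul_eq_zero]
        have : ((m + r - 1) % r) • k = m • k - k := by
          rw [← hsmulmod]
          have hmr : m + r - 1 = m + (r - 1) := by omega
          rw [hmr, add_nsmul, hm1]
          ring
        rw [this]
        have hz' : z = (x - m • k) + k := by rw [hzm]; ring
        rw [hz']; ring
      have hcardO : ∑ z ∈ O, q z = r * q x := by
        rw [hO, Finset.sum_image hinj]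
        have : ∀ m ∈ Finset.range r, q (x - m • k) = q x := fun m _ => hqiter m
        rw [Finset.sum_congr rfl this, Finset.sum_const, Finset.card_range, smul_eq_mul]
      have hssub : S \ O ⊂ S := Finset.sdiff_ssubset hOsub ⟨x, hxO⟩
      have hIH := ih (S \ O) hssub hS'
      have hsplit : ∑ z ∈ S \ O, q z + ∑ z ∈ O, q z = ∑ z ∈ S, q z :=
        Finset.sum_sdiff hOsub
      rw [← hsplit]
      exact dvd_add hIH (by rw [hcardO]; exact Dvd.intro _ rfl)

end Orbit




section Forward

lemma forward_div (d ℓ n N : ℕ) (hd : 2 ≤ d) (hl : 2 ≤ ℓ) (hn : 1 ≤ n)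
    (hN : N = (d - 1) * ℓ + 2)
    (T : Set (Sym2 (ZMod N))) (G : Finset (ZMod N))
    (hT1 : ∀ p ∈ T, IsDiag d N p) (hG : IsAngle d N T G)
    (hGinv : Finset.image (fun x => x - ((n * (d - 1) : ℕ) : ZMod N)) G = G) :
    N ∣ n * (d - 1) * (ℓ - 1) := by
  haveI : NeZero N := ⟨by omega⟩
  set k : ZMod N := ((n * (d - 1) : ℕ) : ZMod N) with hk
  have hcard : G.card = d + 1 := hG.1
  have hG2 : 2 ≤ G.card := by omega
  have hmemiff : ∀ z : ZMod N, z ∈ G ↔ z - k ∈ G := by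
    intro z
    constructor
    · intro hz
      rw [← hGinv]
      exact Finset.mem_image_of_mem _ hz
    · intro hz
      rw [← hGinv] at hz
      obtain ⟨w, hw, hwz⟩ := Finset.mem_image.mp hz
      have : w = z := sub_left_injective hwz
      rwa [← this]
  have hgapinv : ∀ x : ZMod N, gapOf G (x - k) = gapOf G x := by
    intro x
    unfold gapOf
    congr 1
    ext m
    have : x - k + (m : ZMod N) = (x + (m : ZMod N)) - k := by ring
    simp only [Set.mem_setOf_eq, this]
    rw [← hmemiff]
  set q : ZMod N → ℕ := fun x => (gapOf G x - 1) / (d - 1) with hq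
  have hqinv : ∀ x, q (x - k) = q x := by intro x; simp only [hq, hgapinv]
  have hdvd : ∀ x ∈ G, (d - 1) ∣ (gapOf G x - 1) := by
    intro x hx
    have hsx := succ_mem hG2 x
    have hne := succ_ne hG2 x
    have harc : ∀ z ∈ G, ¬ InArc N x (succOf G x) z := fun z hz => arc_empty hG2 x hz
    rcases hG.2 x (succOf G x) hx hsx (Ne.symm hne) harc with h1 | h1
    · rw [succ_sub_val hG2] at h1
      rw [h1]; simp
    · obtain ⟨u, v, hp, h2, h3, h4⟩ := hT1 _ h1
      rw [Sym2.eq_iff] at hp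
      rcases hp with ⟨rfl, rfl⟩ | ⟨rfl, rfl⟩
      · rwa [succ_sub_val hG2] at h4
      · have hval : (x - succOf G x).val = N - gapOf G x := by
          have he : x - succOf G x = 0 - (succOf G x - x) := by ring
          have hpos : (0 : ZMod N).val < (succOf G x - x).val := by
            rw [ZMod.val_zero, succ_sub_val hG2]
            exact gap_pos hG2 x
          rw [he, val_sub_gt hpos, ZMod.val_zero]
          rw [succ_sub_val hG2]
          omega
        rw [hval] at h4
        have hgl : gapOf G x < N := gap_lt hG2 x
        have hgp : 0 < gapOf G x := gap_pos hG2 x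
        have hN2 : (d - 1) ∣ (N - 2) := ⟨ℓ, by omega⟩
        have heq : gapOf G x - 1 = (N - 2) - (N - gapOf G x - 1) := by omega
        rw [heq]
        exact Nat.dvd_sub hN2 h4
  have hsum : ∑ x ∈ G, gapOf G x = N := sum_gaps hG2
  have hsub : N - (d + 1) = (d - 1) * (ℓ - 1) := by
    obtain ⟨a, rfl⟩ : ∃ a, d = a + 2 := ⟨d - 2, by omega⟩
    obtain ⟨L, rfl⟩ : ∃ L, ℓ = L + 1 := ⟨ℓ - 1, by omega⟩
    have h1 : a + 2 - 1 = a + 1 := by omega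
    rw [h1] at hN ⊢
    have h2 : L + 1 - 1 = L := by omega
    rw [h2, hN]
    have : (a+1) * (L+1) = (a+1)*L + (a+1) := by ring
    rw [this]
    omega
  have hNcard : d + 1 ≤ N := by
    have := Finset.card_le_univ G
    rw [ZMod.card, hcard] at this
    exact this
  have hsum1 : ∑ x ∈ G, (gapOf G x - 1) = (d - 1) * (ℓ - 1) := by
    have h1 : ∑ x ∈ G, gapOf G x = ∑ x ∈ G, ((gapOf G x - 1) + 1) := by
      apply Finset.sum_congr rfl
      intro x _
      have := gap_pos hG2 x
      omega
    rw [h1, Finset.sum_add_distrib, Finset.sum_const, smul_eq_mul, mul_one, hcard] at hsum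
    omega
  have hsumq : ∑ x ∈ G, q x = ℓ - 1 := by
    have h1 : (d - 1) * (∑ x ∈ G, q x) = (d - 1) * (ℓ - 1) := by
      rw [Finset.mul_sum]
      rw [← hsum1]
      apply Finset.sum_congr rfl
      intro x hx
      simp only [hq]
      exact Nat.mul_div_cancel' (hdvd x hx)
    exact Nat.eq_of_mul_eq_mul_left (by omega) h1
  have horb : addOrderOf k ∣ ℓ - 1 := by
    rw [← hsumq]
    exact orbit_sum k q hqinv G (fun x hx => (hmemiff x).mp hx)
  have hord : addOrderOf k = N / N.gcd (n * (d - 1)) :=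
    ZMod.addOrderOf_coe (n * (d-1)) (NeZero.ne N)
  rw [hord] at horb
  have hgdvdN : N.gcd (n * (d - 1)) ∣ N := Nat.gcd_dvd_left _ _
  have hgdvdk : N.gcd (n * (d - 1)) ∣ n * (d - 1) := Nat.gcd_dvd_right _ _
  have hNfact : N = N.gcd (n * (d - 1)) * (N / N.gcd (n * (d - 1))) :=
    (Nat.mul_div_cancel' hgdvdN).symm
  calc N = N.gcd (n * (d - 1)) * (N / N.gcd (n * (d - 1))) := hNfact
  _ ∣ (n * (d - 1)) * (ℓ - 1) := mul_dvd_mul hgdvdk horb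

end Forward

section Constr

/-- fan-center vertex of block `b` -/
def Avtx (c s b : ℕ) : ℕ := b * c + (s - 1)

/-- chord from the fan-center of block `b` with parameter `t` -/
def chordC (N c s d b t : ℕ) : Sym2 (ZMod N) :=
  s(((Avtx c s b : ℕ) : ZMod N), ((Avtx c s b + ((d-1)*t + 1) : ℕ) : ZMod N))

def TTC (N c s d r qq : ℕ) : Set (Sym2 (ZMod N)) :=
  {p | ∃ b t : ℕ, b < r ∧ 1 ≤ t ∧ t ≤ qq ∧ p = chordC N c s d b t}

def GGC (N c s : ℕ) [NeZero N] : Finset (ZMod N) :=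
  Finset.univ.filter (fun x : ZMod N => x.val % c < s)

variable {N c r s qq d : ℕ} [NeZero N]

/-- bundle of numeric hypotheses for the construction -/
structure CH (N c r s qq d : ℕ) : Prop where
  hd : 2 ≤ d
  hs1 : 1 ≤ s
  hq1 : 1 ≤ qq
  hr1 : 1 ≤ r
  hcs : c = s + (d-1)*qq
  hNrc : N = r * c
  hrs : r * s = d + 1

namespace CH

variable (H : CH N c r s qq d)
include H

lemma hM2 : 2 ≤ (d-1)*qq + 1 := by
  have := H.hd; have := H.hq1; have h : 1 ≤ (d-1)*qq := Nat.one_le_iff_ne_zero.mpr (by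
    have : 1 ≤ d - 1 := by omega
    positivity)
  omega

lemma hcsM : c = (s - 1) + ((d-1)*qq + 1) := by have := H.hcs; have := H.hs1; omega

lemma hc2 : 2 ≤ c := by have := H.hcsM; have := H.hM2; omega

lemma hsc : s ≤ c := by have := H.hcs; omega

lemma hMc : (d-1)*qq + 1 ≤ c := by have := H.hcsM; omega

lemma hNM : (d-1)*qq + 1 + 2 ≤ N := by
  -- N - M ≥ 2
  have hM := H.hM2
  have hc := H.hcsM
  have hN := H.hNrc
  rcases Nat.lt_or_ge r 2 with h | h
  · -- r = 1, s = d + 1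
    have hr : r = 1 := by have := H.hr1; omega
    have hs : s = d + 1 := by have := H.hrs; rw [hr] at this; omega
    have := H.hd
    rw [hr, one_mul] at hN
    omega
  · -- r ≥ 2 : N = r*c ≥ 2c
    have h2 : 2 * c ≤ r * c := Nat.mul_le_mul_right c h
    have := H.hc2
    omega

lemma hNc : c ≤ N := by
  have := H.hNrc; have := H.hr1
  calc c = 1 * c := (one_mul c).symm
  _ ≤ r * c := Nat.mul_le_mul_right c H.hr1
  _ = N := H.hNrc.symm

lemma hN4 : 4 ≤ N := by have := H.hNM; have := H.hM2; omega

lemma hAlt {b : ℕ} (hb : b < r) : Avtx c s b + ((d-1)*qq + 1) ≤ N := by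
  unfold Avtx
  have h1 : b * c + c ≤ r * c := by
    calc b * c + c = (b+1) * c := by ring
    _ ≤ r * c := Nat.mul_le_mul_right c (by omega)
  have := H.hcsM
  have := H.hNrc
  omega

lemma hAltN {b : ℕ} (hb : b < r) : Avtx c s b < N := by
  have := H.hAlt hb; have := H.hM2; omega

lemma hElt {b t : ℕ} (hb : b < r) (ht : t ≤ qq) : Avtx c s b + ((d-1)*t + 1) ≤ N := by
  have h1 : (d-1)*t ≤ (d-1)*qq := Nat.mul_le_mul_left _ ht
  have := H.hAlt hb
  omega

/-- the difference of the two endpoints of a chord -/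
lemma chord_diff {b t : ℕ} :
    ((Avtx c s b + ((d-1)*t + 1) : ℕ) : ZMod N) - ((Avtx c s b : ℕ) : ZMod N)
      = (((d-1)*t + 1 : ℕ) : ZMod N) := by
  push_cast
  ring

lemma chord_diff_val {b t : ℕ} (hb : b < r) (ht : t ≤ qq) :
    (((Avtx c s b + ((d-1)*t + 1) : ℕ) : ZMod N) - ((Avtx c s b : ℕ) : ZMod N)).val
      = (d-1)*t + 1 := by
  rw [H.chord_diff]
  apply ZMod.val_cast_of_lt
  have h1 : (d-1)*t ≤ (d-1)*qq := Nat.mul_le_mul_left _ ht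
  have := H.hNM
  omega

lemma chord_isdiag {b t : ℕ} (hb : b < r) (ht1 : 1 ≤ t) (ht : t ≤ qq) :
    IsDiag d N (chordC N c s d b t) := by
  refine ⟨_, _, rfl, ?_, ?_, ?_⟩
  · rw [H.chord_diff_val hb ht]
    have : 1 ≤ (d-1)*t := by
      have h1 : 1 ≤ d - 1 := by have := H.hd; omega
      calc 1 = 1 * 1 := rfl
      _ ≤ (d-1)*t := Nat.mul_le_mul h1 ht1
    omega
  · rw [H.chord_diff_val hb ht]
    have h1 : (d-1)*t ≤ (d-1)*qq := Nat.mul_le_mul_left _ ht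
    have := H.hNM
    omega
  · rw [H.chord_diff_val hb ht]
    simp

end CH

end Constr

namespace CH
variable {N c r s qq d : ℕ} [NeZero N] (H : CH N c r s qq d)
include H

lemma hc0 : 0 < c := by have := H.hc2; omega

lemma beta_pos {b b' : ℕ} (hb : b < r) (hb' : b' < r) (hne : b ≠ b') :
    1 ≤ (b' + r - b) % r ∧ (b' + r - b) % r < r := by
  have hr0 : 0 < r := H.hr1
  refine ⟨?_, Nat.mod_lt _ hr0⟩
  by_contra h
  have h0 : (b' + r - b) % r = 0 := by omega
  obtain ⟨u, hu⟩ := Nat.dvd_of_mod_eq_zero h0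
  rcases Nat.lt_or_ge u 2 with hu2 | hu2
  · interval_cases u <;> omega
  · have : 2 * r ≤ r * u := by
      calc 2 * r = r * 2 := by ring
      _ ≤ r * u := Nat.mul_le_mul_left r hu2
    omega

lemma block_mod (m : ℕ) : (m * c) % N = (m % r) * c := by
  have h1 : m * c % (r*c) = ((m % r) * c) % (r*c) :=
    Nat.ModEq.mul_right' c ((Nat.mod_modEq m r).symm)
  have h2 : (m % r) * c < r * c := (Nat.mul_lt_mul_right H.hc0).mpr (Nat.mod_lt _ H.hr1)
  rw [H.hNrc, h1, Nat.mod_eq_of_lt h2]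

lemma sub_mul' (a b m : ℕ) (h : b ≤ a) : (a - b) * m = a * m - b * m := by
  exact Nat.sub_mul a b m

/-- difference of two block base points (fan centers). -/
lemma Adiff {b b' : ℕ} (hb : b < r) (hb' : b' < r) :
    (((Avtx c s b' : ℕ) : ZMod N) - ((Avtx c s b : ℕ) : ZMod N)).val
      = ((b' + r - b) % r) * c := by
  have hA : Avtx c s b ≤ N := by have := H.hAltN hb; omega
  rw [sub_cast hA, ZMod.val_natCast]
  have he : Avtx c s b' + (N - Avtx c s b) = (b' + r - b) * c := by
    unfold Avtx
    have h1 : b * c + (s-1) ≤ r * c := by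
      have h0 : (b+1) * c ≤ r * c := Nat.mul_le_mul_right c (by omega)
      have hbc : (b+1) * c = b * c + c := by ring
      have hs := H.hsc
      have := H.hc0
      omega
    have h2 : (b' + r - b) * c = b' * c + r * c - b * c := by
      rw [Nat.sub_mul, Nat.add_mul]
    have h3 : b * c ≤ r * c := Nat.mul_le_mul_right c (by omega)
    have hNe := H.hNrc
    omega
  rw [he, H.block_mod]

/-- difference from a block base point to a shifted point in another block. -/
lemma AEdiff {b b' e' : ℕ} (hb : b < r) (hb' : b' < r) :
    (((Avtx c s b' + e' : ℕ) : ZMod N) - ((Avtx c s b : ℕ) : ZMod N)).val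
      = (((b' + r - b) % r) * c + e') % N := by
  have hA : Avtx c s b ≤ N := by have := H.hAltN hb; omega
  rw [sub_cast hA, ZMod.val_natCast]
  have he : Avtx c s b' + e' + (N - Avtx c s b) = (b' + r - b) * c + e' := by
    unfold Avtx
    have h1 : b * c + (s-1) ≤ r * c := by
      have h0 : (b+1) * c ≤ r * c := Nat.mul_le_mul_right c (by omega)
      have hbc : (b+1) * c = b * c + c := by ring
      have hs := H.hsc
      have := H.hc0
      omega
    have h2 : (b' + r - b) * c = b' * c + r * c - b * c := by
      rw [Nat.sub_mul, Nat.add_mul]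
    have h3 : b * c ≤ r * c := Nat.mul_le_mul_right c (by omega)
    have hNe := H.hNrc
    omega
  rw [he, ← Nat.mod_add_mod, H.block_mod]

lemma chord_noncross {b t b' t' : ℕ} (hb : b < r) (ht1 : 1 ≤ t) (ht : t ≤ qq)
    (hb' : b' < r) (ht1' : 1 ≤ t') (ht' : t' ≤ qq) :
    ¬ Crosses N (chordC N c s d b t) (chordC N c s d b' t') := by
  by_cases hbeq : b = b'
  · subst hbeq
    exact not_crosses_of_shared ((Avtx c s b : ℕ) : ZMod N)
      (Sym2.mem_iff.mpr (Or.inl rfl)) (Sym2.mem_iff.mpr (Or.inl rfl))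
  · apply not_crosses_of_outside
    · -- first endpoint of q : the base point of block b'
      rintro ⟨h1, h2⟩
      rw [H.Adiff hb hb'] at h1 h2
      rw [H.chord_diff_val hb ht] at h2
      set β := (b' + r - b) % r with hβ
      have hβ1 := H.beta_pos hb hb' hbeq
      have hec : (d-1)*t + 1 ≤ c := by
        have h3 : (d-1)*t ≤ (d-1)*qq := Nat.mul_le_mul_left _ ht
        have := H.hMc
        omega
      have : c ≤ β * c := by
        calc c = 1 * c := (one_mul c).symm
        _ ≤ β * c := Nat.mul_le_mul_right c hβ1.1
      omega
    · -- second endpoint of q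
      rintro ⟨h1, h2⟩
      rw [H.AEdiff hb hb'] at h1 h2
      rw [H.chord_diff_val hb ht] at h2
      set β := (b' + r - b) % r with hβ
      have hβ1 := H.beta_pos hb hb' hbeq
      have he'M : (d-1)*t' + 1 ≤ c := by
        have h3 : (d-1)*t' ≤ (d-1)*qq := Nat.mul_le_mul_left _ ht'
        have := H.hMc
        omega
      have hsum : β * c + ((d-1)*t' + 1) ≤ N := by
        have h4 : (β + 1) * c ≤ r * c := Nat.mul_le_mul_right c (by omega)
        rw [H.hNrc]
        nlinarith
      rcases Nat.lt_or_ge (β * c + ((d-1)*t' + 1)) N with hlt | hge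
      · rw [Nat.mod_eq_of_lt hlt] at h1 h2
        have hec : (d-1)*t + 1 ≤ c := by
          have h3 : (d-1)*t ≤ (d-1)*qq := Nat.mul_le_mul_left _ ht
          have := H.hMc
          omega
        have : c ≤ β * c := by
          calc c = 1 * c := (one_mul c).symm
          _ ≤ β * c := Nat.mul_le_mul_right c hβ1.1
        omega
      · have heq : β * c + ((d-1)*t' + 1) = N := by omega
        rw [heq, Nat.mod_self] at h1
        omega

lemma GG_mem {x : ZMod N} : x ∈ GGC N c s ↔ x.val % c < s := by
  simp [GGC]

lemma GG_coord {x : ZMod N} (hx : x ∈ GGC N c s) :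
    ∃ b t, b < r ∧ t < s ∧ x.val = b * c + t := by
  rw [H.GG_mem] at hx
  refine ⟨x.val / c, x.val % c, ?_, hx, (Nat.div_add_mod' _ _).symm⟩
  have hv : x.val < c * r := by rw [mul_comm, ← H.hNrc]; exact ZMod.val_lt x
  exact Nat.div_lt_of_lt_mul hv

lemma coord_lt {b t : ℕ} (hb : b < r) (ht : t < s) : b * c + t < N := by
  have h1 : (b + 1) * c ≤ r * c := Nat.mul_le_mul_right c (by omega)
  have h2 : t < c := lt_of_lt_of_le ht H.hsc
  rw [H.hNrc]
  nlinarith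

lemma GG_mem_coord {b t : ℕ} (hb : b < r) (ht : t < s) :
    ((b * c + t : ℕ) : ZMod N) ∈ GGC N c s := by
  rw [H.GG_mem, ZMod.val_cast_of_lt (H.coord_lt hb ht)]
  rw [Nat.add_comm, Nat.add_mul_mod_self_right]
  rwa [Nat.mod_eq_of_lt (lt_of_lt_of_le ht H.hsc)]

lemma GG_card : (GGC N c s).card = d + 1 := by
  classical
  have himg : GGC N c s
      = (Finset.univ : Finset (Fin r × Fin s)).image
          (fun p => ((p.1.1 * c + p.2.1 : ℕ) : ZMod N)) := by
    ext x
    simp only [Finset.mem_image, Finset.mem_univ, true_and]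
    constructor
    · intro hx
      obtain ⟨b, t, hb, ht, hbt⟩ := H.GG_coord hx
      exact ⟨(⟨b, hb⟩, ⟨t, ht⟩), by rw [← hbt, cast_val]⟩
    · rintro ⟨⟨b, t⟩, rfl⟩
      exact H.GG_mem_coord b.2 t.2
  rw [himg, Finset.card_image_of_injOn, Finset.card_univ]
  · simp [← H.hrs]
  · rintro ⟨b1, t1⟩ - ⟨b2, t2⟩ - heq
    simp only at heq
    have h1 := congrArg ZMod.val heq
    rw [ZMod.val_cast_of_lt (H.coord_lt b1.2 t1.2),
      ZMod.val_cast_of_lt (H.coord_lt b2.2 t2.2)] at h1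
    have ht1c : (t1 : ℕ) < c := lt_of_lt_of_le t1.2 H.hsc
    have ht2c : (t2 : ℕ) < c := lt_of_lt_of_le t2.2 H.hsc
    have hb12 : (b1 : ℕ) = b2 ∧ (t1 : ℕ) = t2 := by
      constructor
      · have e1 : ((b1:ℕ) * c + t1) / c = b1 := by
          rw [Nat.add_comm, Nat.add_mul_div_right _ _ H.hc0, Nat.div_eq_of_lt ht1c]; omega
        have e2 : ((b2:ℕ) * c + t2) / c = b2 := by
          rw [Nat.add_comm, Nat.add_mul_div_right _ _ H.hc0, Nat.div_eq_of_lt ht2c]; omega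
        rw [← e1, ← e2, h1]
      · have e1 : ((b1:ℕ) * c + t1) % c = t1 := by
          rw [Nat.add_comm, Nat.add_mul_mod_self_right, Nat.mod_eq_of_lt ht1c]
        have e2 : ((b2:ℕ) * c + t2) % c = t2 := by
          rw [Nat.add_comm, Nat.add_mul_mod_self_right, Nat.mod_eq_of_lt ht2c]
        rw [← e1, ← e2, h1]
    ext
    · exact hb12.1
    · exact hb12.2

end CH

namespace CH
variable {N c r s qq d : ℕ} [NeZero N] (H : CH N c r s qq d)
include H

lemma chord_mem_TT {b t : ℕ} (hb : b < r) (ht1 : 1 ≤ t) (ht : t ≤ qq) :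
    chordC N c s d b t ∈ TTC N c s d r qq := ⟨b, t, hb, ht1, ht, rfl⟩

/-- `z := x + M` viewed from a fan center `x`. -/
lemma center_succ {b₁ : ℕ} (hb₁ : b₁ < r) (i : ℕ) (hi : i = Avtx c s b₁) :
    (((i + ((d-1)*qq + 1) : ℕ) : ZMod N)) ∈ GGC N c s ∧
      ((((i + ((d-1)*qq + 1) : ℕ) : ZMod N)) - ((i : ℕ) : ZMod N)).val = (d-1)*qq + 1 := by
  constructor
  · rw [H.GG_mem, ZMod.val_natCast]
    have he : i + ((d-1)*qq + 1) = (b₁ + 1) * c := by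
      rw [hi]; unfold Avtx
      have := H.hcsM
      have hbc : (b₁ + 1) * c = b₁ * c + c := by ring
      omega
    rw [he, H.block_mod, Nat.mul_mod_left]
    have := H.hs1; omega
  · have hsub : ((i + ((d-1)*qq + 1) : ℕ) : ZMod N) - ((i : ℕ) : ZMod N)
        = (((d-1)*qq + 1 : ℕ) : ZMod N) := by push_cast; ring
    rw [hsub, ZMod.val_cast_of_lt]
    have := H.hNM; omega

lemma GG_isangle : IsAngle d N (TTC N c s d r qq) (GGC N c s) := by
  refine ⟨H.GG_card, ?_⟩
  intro x y hx hy hne hemp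
  obtain ⟨b₁, t₁, hb₁, ht₁, hco⟩ := H.GG_coord hx
  set Δ := (y - x).val with hΔdef
  have hΔ0 : Δ ≠ 0 := fun h => hne (val_sub_zero_iff.mp h).symm
  have hyx : y = x + ((Δ : ℕ) : ZMod N) := by
    rw [hΔdef, cast_val]; ring
  have hxval : x = ((x.val : ℕ) : ZMod N) := (cast_val x).symm
  by_cases hts : t₁ + 1 < s
  · -- next corner is x + 1
    by_cases hΔ1 : Δ = 1
    · exact Or.inl hΔ1
    · exfalso
      set z : ZMod N := (((x.val + 1 : ℕ) : ZMod N)) with hz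
      have hzval : (z - x).val = 1 := by
        have h1 : z - x = ((1 : ℕ) : ZMod N) := by
          rw [hz]; push_cast; rw [cast_val]; ring
        rw [h1, ZMod.val_cast_of_lt]
        have := H.hN4; omega
      have hzG : z ∈ GGC N c s := by
        rw [hz, hco]
        have : b₁ * c + t₁ + 1 = b₁ * c + (t₁ + 1) := by omega
        rw [this]
        exact H.GG_mem_coord hb₁ (by omega)
      exact hemp z hzG ⟨by rw [hzval]; omega, by rw [hzval]; omega⟩
  · have ht1s : t₁ = s - 1 := by have := H.hs1; omega
    have hiA : x.val = Avtx c s b₁ := by rw [hco, ht1s]; rfl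
    obtain ⟨hzG, hzval⟩ := H.center_succ hb₁ x.val hiA
    set z : ZMod N := (((x.val + ((d-1)*qq + 1) : ℕ) : ZMod N)) with hz
    have hzx : (z - x).val = (d-1)*qq + 1 := by
      have h1 : z - x = z - ((x.val : ℕ) : ZMod N) := by rw [cast_val]
      rw [h1]
      exact hzval
    have hΔM : (d-1)*qq + 1 ≤ Δ := by
      by_contra hlt
      push_neg at hlt
      -- then y has bad residue
      have hyval : y.val = x.val + Δ := by
        have h1 : y = ((x.val + Δ : ℕ) : ZMod N) := by
          rw [hyx]; push_cast; simp only [cast_val]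
        rw [h1, ZMod.val_cast_of_lt]
        · rw [hco, ht1s]
          have h1 : (b₁ + 1) * c ≤ r * c := Nat.mul_le_mul_right c (by omega)
          have hbc : (b₁ + 1) * c = b₁ * c + c := by ring
          have := H.hcsM
          have hNe := H.hNrc
          omega
      have hymem := (H.GG_mem).mp hy
      rw [hyval, hco, ht1s] at hymem
      have hcm := H.hcsM
      have harith : b₁ * c + (s - 1) + Δ = b₁ * c + (s - 1 + Δ) := by omega
      rw [harith, Nat.add_comm, Nat.add_mul_mod_self_right, Nat.mod_eq_of_lt (by omega)] at hymem
      have := H.hs1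
      omega
    rcases Nat.eq_or_lt_of_le hΔM with heq | hlt
    · -- y = z , the chord situation
      right
      have hyz : y = ((x.val + ((d-1)*qq + 1) : ℕ) : ZMod N) := by
        rw [hyx, ← heq]; push_cast; simp only [cast_val]
      have hch : s(x, y) = chordC N c s d b₁ qq := by
        rw [chordC, ← hiA, ← hxval, ← hyz]
      rw [hch]
      exact H.chord_mem_TT hb₁ H.hq1 (le_refl qq)
    · exfalso
      exact hemp z hzG ⟨by rw [hzx]; have := H.hM2; omega, by rw [hzx]; omega⟩

end CH

namespace CH
variable {N c r s qq d : ℕ} [NeZero N] (H : CH N c r s qq d)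
include H

lemma hN2dvd : (d-1) ∣ (N - 2) ∧ N - 2 = (d-1) * (1 + r * qq) := by
  have h1 : r * c = r * s + r * ((d-1)*qq) := by rw [H.hcs]; ring
  have h2 : r * ((d-1)*qq) = (d-1) * (r*qq) := by ring
  have h3 : (d-1) * (1 + r*qq) = (d-1) + (d-1)*(r*qq) := by ring
  have h4 := H.hrs
  have h5 := H.hNrc
  have h6 := H.hd
  exact ⟨⟨1 + r * qq, by omega⟩, by omega⟩

lemma rs_expand : (r - 1) * s + s = r * s := by
  have h : (r - 1 + 1) * s = (r-1)*s + s := by ring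
  rw [← h, Nat.sub_add_cancel H.hr1]

/-- central case: a diagonal with both endpoints among the corners of the central cell
is one of the long chords. -/
lemma central_case {x y : ZMod N} (hx : x.val % c < s) (hy : y.val % c < s)
    (hij : x.val < y.val) (h2 : 2 ≤ (y - x).val) (h3 : (y - x).val ≤ N - 2)
    (h4 : (d-1) ∣ ((y - x).val - 1)) :
    s(x, y) ∈ TTC N c s d r qq := by
  obtain ⟨b₁, t₁, hb₁, ht₁, hco₁⟩ := H.GG_coord ((H.GG_mem).mpr hx)
  obtain ⟨b₂, t₂, hb₂, ht₂, hco₂⟩ := H.GG_coord ((H.GG_mem).mpr hy)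
  have hΔ : (y - x).val = y.val - x.val := val_sub_le (le_of_lt hij)
  set Δ := (y - x).val with hΔdef
  have hb12 : b₁ ≤ b₂ := by
    by_contra hgt
    push_neg at hgt
    have h5 : (b₂ + 1) * c ≤ b₁ * c := Nat.mul_le_mul_right c (by omega)
    have h6 : (b₂ + 1) * c = b₂ * c + c := by ring
    have h7 : t₂ < c := lt_of_lt_of_le ht₂ H.hsc
    omega
  set u := b₂ - b₁ with hu
  have hbu : b₂ = b₁ + u := by omega
  have hbc2 : b₂ * c = b₁ * c + u * c := by rw [hbu]; ring
  have e1 : Δ + t₁ = t₂ + u * c := by omega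
  have hus : u * c = u * s + u * ((d-1) * qq) := by rw [H.hcs]; ring
  have hur : u ≤ r - 1 := by omega
  have hγ1 : t₁ + 1 ≤ u * s + t₂ := by
    rcases Nat.eq_zero_or_pos u with h | h
    · rw [h] at e1 ⊢
      simp only [Nat.zero_mul, Nat.zero_add] at e1 ⊢
      omega
    · have : s ≤ u * s := by
        calc s = 1 * s := (one_mul s).symm
        _ ≤ u * s := Nat.mul_le_mul_right s h
      omega
  set γ := u * s + t₂ - t₁ with hγ
  have hΔγ : Δ = γ + u * ((d-1) * qq) := by omega
  have hdγ : (d-1) ∣ (γ - 1) := by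
    have hdu : (d-1) ∣ u * ((d-1) * qq) := ⟨u * qq, by ring⟩
    have heq : γ - 1 = (Δ - 1) - u * ((d-1) * qq) := by omega
    obtain ⟨w, hw⟩ := hdu
    rw [heq, hw]
    exact Nat.dvd_sub h4 ⟨w, rfl⟩
  have hγd : γ ≤ d := by
    have h5 : u * s ≤ (r-1) * s := Nat.mul_le_mul_right s hur
    have h6 := H.rs_expand
    have h7 := H.hrs
    omega
  obtain ⟨m, hm⟩ := hdγ
  have hd1 : 1 ≤ d - 1 := by have := H.hd; omega
  have hm1 : m ≤ 1 := by
    by_contra hm2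
    push_neg at hm2
    have : (d-1) * 2 ≤ (d-1) * m := Nat.mul_le_mul_left _ hm2
    omega
  interval_cases m
  · -- γ = 1 : neighbouring corners
    have hγeq : γ = 1 := by omega
    rcases Nat.eq_zero_or_pos u with hu0 | hu1
    · exfalso
      rw [hu0] at hΔγ
      simp only [Nat.zero_mul, Nat.add_zero] at hΔγ
      omega
    · have hu1' : u = 1 := by
        by_contra hne1
        have hu2 : 2 ≤ u := by omega
        have : 2 * s ≤ u * s := Nat.mul_le_mul_right s hu2
        have := H.hs1
        omega
      rw [hu1', one_mul] at hγ hus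
      have hj : u * ((d-1)*qq) = (d-1)*qq := by rw [hu1', one_mul]
      have ht₁s : t₁ = s - 1 := by have := H.hs1; omega
      have ht₂0 : t₂ = 0 := by omega
      have hΔM : Δ = (d-1)*qq + 1 := by omega
      have hxA : x.val = Avtx c s b₁ := by rw [hco₁, ht₁s]; rfl
      have hbc2' : b₂ * c = b₁ * c + c := by rw [hbc2, hu1', one_mul]
      have hyE : y.val = Avtx c s b₁ + ((d-1)*qq + 1) := by
        have hcm := H.hcsM
        unfold Avtx
        omega
      refine ⟨b₁, qq, by omega, H.hq1, le_refl qq, ?_⟩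
      rw [chordC, ← hyE, ← hxA]
      simp only [cast_val]
  · -- γ = d : the wrap-around long chord
    have hγeq : γ = d := by omega
    have h5 : u * s ≤ (r-1) * s := Nat.mul_le_mul_right s hur
    have h6 := H.rs_expand
    have h7 := H.hrs
    have ht₂s : t₂ = s - 1 := by have := H.hs1; omega
    have ht₁0 : t₁ = 0 := by omega
    have huseq : u * s = (r-1) * s := by omega
    have hueq : u = r - 1 :=
      Nat.eq_of_mul_eq_mul_right (by have := H.hs1; omega) huseq
    have hb₁0 : b₁ = 0 := by omega
    have hb₂r : b₂ = r - 1 := by omega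
    have hxv : x.val = 0 := by rw [hco₁, hb₁0, ht₁0]; ring
    have hyA : y.val = Avtx c s (r-1) := by rw [hco₂, hb₂r, ht₂s]; rfl
    refine ⟨r - 1, qq, by omega, H.hq1, le_refl qq, ?_⟩
    have hEN : Avtx c s (r-1) + ((d-1)*qq + 1) = N := by
      unfold Avtx
      have h8 : (r-1) * c + c = r * c := by
        have : (r - 1 + 1) * c = (r-1)*c + c := by ring
        rw [← this, Nat.sub_add_cancel H.hr1]
      have := H.hcsM
      have := H.hNrc
      omega
    have hcx : ((Avtx c s (r-1) + ((d-1)*qq + 1) : ℕ) : ZMod N) = x := by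
      rw [hEN, ZMod.natCast_self, ← cast_val x, hxv, Nat.cast_zero]
    have hcy : ((Avtx c s (r-1) : ℕ) : ZMod N) = y := by
      rw [← hyA, cast_val]
    rw [chordC, hcx, hcy]
    exact Sym2.eq_swap
end CH

section OffHelpers
variable {N : ℕ} [NeZero N]

lemma off_diff (A w : ℕ) : ((A + w : ℕ) : ZMod N) - ((A : ℕ) : ZMod N) = ((w : ℕ) : ZMod N) := by
  push_cast; ring

lemma off_diff_val {A w : ℕ} (hw : w < N) :
    (((A + w : ℕ) : ZMod N) - ((A : ℕ) : ZMod N)).val = w := by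
  rw [off_diff, ZMod.val_cast_of_lt hw]

lemma off_diff2 {A w e : ℕ} (h : e ≤ w) :
    ((A + w : ℕ) : ZMod N) - ((A + e : ℕ) : ZMod N) = ((w - e : ℕ) : ZMod N) := by
  push_cast [Nat.cast_sub h]; ring

lemma off_diff2_val {A w e : ℕ} (h : e ≤ w) (hw : w < N) :
    (((A + w : ℕ) : ZMod N) - ((A + e : ℕ) : ZMod N)).val = w - e := by
  rw [off_diff2 h, ZMod.val_cast_of_lt (by omega)]

lemma off_neg_val {A e : ℕ} (he : 0 < e) (heN : e < N) :
    (((A : ℕ) : ZMod N) - ((A + e : ℕ) : ZMod N)).val = N - e := by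
  have h1 : ((A : ℕ) : ZMod N) - ((A + e : ℕ) : ZMod N) = 0 - ((e : ℕ) : ZMod N) := by
    push_cast; ring
  have h2 : (0 : ZMod N).val < ((e : ℕ) : ZMod N).val := by
    rw [ZMod.val_zero, ZMod.val_cast_of_lt heN]; exact he
  rw [h1, val_sub_gt h2, ZMod.val_zero, ZMod.val_cast_of_lt heN]
  omega

end OffHelpers

namespace CH
variable {N c r s qq d : ℕ} [NeZero N] (H : CH N c r s qq d)
include H

lemma fan_core {S : Set (Sym2 (ZMod N))} (hTS : TTC N c s d r qq ⊆ S)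
    (hncr : ∀ p ∈ S, ∀ q ∈ S, ¬ Crosses N p q)
    {b w₁ w₂ : ℕ} (hb : b < r) (hw12 : w₁ < w₂) (hw2 : w₂ ≤ (d-1)*qq + 1)
    (hδ2 : 2 ≤ w₂ - w₁) (hδd : (d-1) ∣ (w₂ - w₁ - 1))
    (hp : s(((Avtx c s b + w₁ : ℕ) : ZMod N), ((Avtx c s b + w₂ : ℕ) : ZMod N)) ∈ S) :
    s(((Avtx c s b + w₁ : ℕ) : ZMod N), ((Avtx c s b + w₂ : ℕ) : ZMod N)) ∈ TTC N c s d r qq := by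
  have hd1 : 1 ≤ d - 1 := by have := H.hd; omega
  have hNM := H.hNM
  rcases Nat.eq_zero_or_pos w₁ with hw10 | hw11
  · -- chord from the fan center
    subst hw10
    set t := (w₂ - 1) / (d-1) with ht
    have hδd0 : (d-1) ∣ (w₂ - 1) := by simpa using hδd
    have htq : w₂ - 1 = (d-1) * t := by rw [ht]; exact (Nat.mul_div_cancel' hδd0).symm
    have ht1 : 1 ≤ t := by
      rcases Nat.eq_zero_or_pos t with h | h
      · rw [h, Nat.mul_zero] at htq; omega
      · exact h
    have htqq : t ≤ qq := by
      have h1 : (d-1) * t ≤ (d-1) * qq := by omega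
      exact Nat.le_of_mul_le_mul_left h1 (by omega)
    have hw2t : w₂ = (d-1)*t + 1 := by omega
    refine ⟨b, t, hb, ht1, htqq, ?_⟩
    rw [chordC, hw2t]
    norm_num
  · exfalso
    set a := w₁ - 1 with ha
    set ρ := a % (d-1) with hρ
    set e := w₁ + (d-1) - ρ with he
    have hρlt : ρ < d - 1 := Nat.mod_lt _ (by omega)
    have hdiva : a = (d-1) * (a / (d-1)) + ρ := (Nat.div_add_mod a (d-1)).symm
    have hdive : e - 1 = (d-1) * (a / (d-1) + 1) := by
      have h1 : (d-1) * (a / (d-1) + 1) = (d-1) * (a / (d-1)) + (d-1) := by ring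
      omega
    have hwe : w₁ < e := by omega
    obtain ⟨m', hm'⟩ := hδd
    have hm'1 : 1 ≤ m' := by
      rcases Nat.eq_zero_or_pos m' with h | h
      · rw [h, Nat.mul_zero] at hm'; omega
      · exact h
    have hδd' : d ≤ w₂ - w₁ := by
      have : (d-1) * 1 ≤ (d-1) * m' := Nat.mul_le_mul_left _ hm'1
      omega
    have hew : e < w₂ := by omega
    set t := (e - 1) / (d-1) with htdef
    have het : e - 1 = (d-1) * t := by
      rw [htdef, hdive, Nat.mul_div_cancel_left _ (by omega : 0 < d - 1)]
    have ht1 : 1 ≤ t := by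
      rcases Nat.eq_zero_or_pos t with h | h
      · rw [h, Nat.mul_zero] at het; omega
      · exact h
    have htqq : t ≤ qq := by
      have h1 : (d-1)*t < (d-1)*qq := by omega
      have := Nat.lt_of_mul_lt_mul_left h1
      omega
    have hchord : chordC N c s d b t ∈ S := hTS (H.chord_mem_TT hb ht1 htqq)
    have heE : (d-1)*t + 1 = e := by omega
    have hAeN : Avtx c s b + e ≤ N := by
      have := H.hAlt hb
      omega
    have hcr : Crosses N (chordC N c s d b t)
        s(((Avtx c s b + w₁ : ℕ) : ZMod N), ((Avtx c s b + w₂ : ℕ) : ZMod N)) := by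
      apply crosses_of
      · -- w₁ endpoint inside (A, A+e)
        refine ⟨?_, ?_⟩
        · rw [off_diff_val (by omega : w₁ < N)]
          omega
        · rw [off_diff_val (by omega : w₁ < N), heE, off_diff_val (by omega : e < N)]
          omega
      · -- w₂ endpoint inside (A+e, A)
        rw [heE]
        refine ⟨?_, ?_⟩
        · rw [off_diff2_val (le_of_lt hew) (by omega : w₂ < N)]
          omega
        · rw [off_diff2_val (le_of_lt hew) (by omega : w₂ < N),
            off_neg_val (by omega : 0 < e) (by omega : e < N)]
          omega
    exact hncr _ hchord _ hp hcr

lemma fan_case {S : Set (Sym2 (ZMod N))} (hTS : TTC N c s d r qq ⊆ S)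
    (hncr : ∀ p ∈ S, ∀ q ∈ S, ¬ Crosses N p q)
    {x y : ZMod N} (hp : s(x, y) ∈ S) (hxf : s ≤ x.val % c)
    (h2 : 2 ≤ (y - x).val) (h3 : (y - x).val ≤ N - 2) (h4 : (d-1) ∣ ((y - x).val - 1)) :
    s(x, y) ∈ TTC N c s d r qq := by
  have hNM := H.hNM
  have hd1 : 1 ≤ d - 1 := by have := H.hd; omega
  set b := x.val / c with hb
  have hbr : b < r := by
    have hv : x.val < c * r := by rw [mul_comm, ← H.hNrc]; exact ZMod.val_lt x
    exact Nat.div_lt_of_lt_mul hv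
  have hxco : x.val = b * c + x.val % c := by
    rw [hb]; exact (Nat.div_add_mod' _ _).symm
  have hxmodc : x.val % c < c := Nat.mod_lt _ H.hc0
  set A := Avtx c s b with hA
  set wx := x.val % c - (s - 1) with hwx
  have hwx1 : 1 ≤ wx := by have := H.hs1; omega
  have hwxM : wx ≤ (d-1)*qq := by
    have := H.hcsM; omega
  have hxa : x.val = A + wx := by
    rw [hA]; unfold Avtx; have := H.hs1; omega
  have hxcast : x = ((A + wx : ℕ) : ZMod N) := by rw [← hxa, cast_val]
  set wy := (y - ((A : ℕ) : ZMod N)).val with hwy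
  have hwxval : (x - ((A : ℕ) : ZMod N)).val = wx := by
    rw [hxcast]; exact off_diff_val (by omega)
  have hAN : A + ((d-1)*qq + 1) ≤ N := H.hAlt hbr
  have hycast : y = ((A : ℕ) : ZMod N) + ((wy : ℕ) : ZMod N) := by
    rw [hwy, cast_val]; ring
  have hywy : y = ((A + wy : ℕ) : ZMod N) := by
    rw [hycast]; push_cast; ring
  have hMwy : wy ≤ (d-1)*qq + 1 := by
    by_contra hgt
    push_neg at hgt
    have hwyN : wy < N := by rw [hwy]; exact ZMod.val_lt _
    have hchord : chordC N c s d b qq ∈ S := hTS (H.chord_mem_TT hbr H.hq1 (le_refl _))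
    have hcr : Crosses N (chordC N c s d b qq) s(x, y) := by
      apply crosses_of
      · refine ⟨by rw [hwxval]; omega, ?_⟩
        rw [hwxval, H.chord_diff_val hbr (le_refl _)]
        omega
      · refine ⟨?_, ?_⟩
        · have hyd : y - ((A + ((d-1)*qq + 1) : ℕ) : ZMod N)
              = ((wy - ((d-1)*qq + 1) : ℕ) : ZMod N) := by
            rw [hywy, off_diff2 (by omega)]
          rw [hyd, ZMod.val_cast_of_lt (by omega)]
          omega
        · have hyd : y - ((A + ((d-1)*qq + 1) : ℕ) : ZMod N)
              = ((wy - ((d-1)*qq + 1) : ℕ) : ZMod N) := by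
            rw [hywy, off_diff2 (by omega)]
          rw [hyd, ZMod.val_cast_of_lt (by omega),
            off_neg_val (by omega) (by omega)]
          omega
    exact hncr _ hchord _ hp hcr
  have hwxy : wx ≠ wy := by
    intro heq
    have : x = y := by rw [hxcast, hywy, heq]
    rw [this, sub_self, ZMod.val_zero] at h2
    omega
  rcases Nat.lt_or_ge wx wy with hlt | hge
  · -- wx < wy : Δ = wy - wx
    have hΔ : (y - x).val = wy - wx := by
      have h5 : y - x = ((wy - wx : ℕ) : ZMod N) := by
        rw [hxcast, hywy, off_diff2 (le_of_lt hlt)]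
      rw [h5, ZMod.val_cast_of_lt (by omega)]
    rw [hxcast, hywy]
    exact H.fan_core hTS hncr hbr hlt hMwy (by omega) (by rw [← hΔ]; exact h4)
      (by rw [← hxcast, ← hywy]; exact hp)
  · have hlt : wy < wx := by omega
    have hδ : (x - y).val = wx - wy := by
      have h5 : x - y = ((wx - wy : ℕ) : ZMod N) := by
        rw [hxcast, hywy, off_diff2 (le_of_lt hlt)]
      rw [h5, ZMod.val_cast_of_lt (by omega)]
    have hΔ : (y - x).val = N - (wx - wy) := by
      have h5 : (x - y).val ≠ 0 := by
        rw [hδ]; omega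
      have h6 : y - x = 0 - (x - y) := by ring
      have h7 : (0 : ZMod N).val < (x - y).val := by rw [ZMod.val_zero]; omega
      rw [h6, val_sub_gt h7, ZMod.val_zero, hδ]
      omega
    have hd2 : 2 ≤ wx - wy := by
      have := H.hN2dvd
      omega
    have hdvd : (d-1) ∣ (wx - wy - 1) := by
      obtain ⟨hv, hNe⟩ := H.hN2dvd
      have heq : wx - wy - 1 = (N - 2) - ((y-x).val - 1) := by
        rw [hΔ]; omega
      rw [heq]
      exact Nat.dvd_sub hv h4
    have hpswap : s(((A + wy : ℕ) : ZMod N), ((A + wx : ℕ) : ZMod N)) ∈ S := by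
      rw [← hywy, ← hxcast, Sym2.eq_swap]; exact hp
    have := H.fan_core hTS hncr hbr hlt (by omega) hd2 hdvd hpswap
    rw [hxcast, hywy, Sym2.eq_swap]
    exact this

end CH

namespace CH
variable {N c r s qq d : ℕ} [NeZero N] (H : CH N c r s qq d)
include H

lemma swap_diag_data {x y : ZMod N} (h2 : 2 ≤ (y - x).val) (h3 : (y - x).val ≤ N - 2)
    (h4 : (d-1) ∣ ((y - x).val - 1)) :
    2 ≤ (x - y).val ∧ (x - y).val ≤ N - 2 ∧ (d-1) ∣ ((x - y).val - 1) := by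
  have hN4 := H.hN4
  have hyx0 : (y - x).val ≠ 0 := by omega
  have h6 : x - y = 0 - (y - x) := by ring
  have h7 : (0 : ZMod N).val < (y - x).val := by rw [ZMod.val_zero]; omega
  have hv : (x - y).val = N - (y - x).val := by
    rw [h6, val_sub_gt h7, ZMod.val_zero]
    have := ZMod.val_lt (y - x)
    omega
  obtain ⟨hdvd, hNe⟩ := H.hN2dvd
  refine ⟨by omega, by omega, ?_⟩
  have heq : (x - y).val - 1 = (N - 2) - ((y - x).val - 1) := by omega
  rw [heq]
  exact Nat.dvd_sub hdvd h4

lemma TT_max : ∀ S : Set (Sym2 (ZMod N)), (∀ p ∈ S, IsDiag d N p) →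
    (∀ p ∈ S, ∀ q ∈ S, ¬ Crosses N p q) → TTC N c s d r qq ⊆ S →
    S = TTC N c s d r qq := by
  intro S hSdiag hncr hTS
  apply Set.Subset.antisymm _ hTS
  intro p hp
  obtain ⟨x, y, rfl, h2, h3, h4⟩ := hSdiag p hp
  rcases Nat.lt_or_ge (x.val % c) s with hxf | hxf
  · rcases Nat.lt_or_ge (y.val % c) s with hyf | hyf
    · -- both central
      have hxy : x ≠ y := by
        intro h
        rw [h, sub_self, ZMod.val_zero] at h2
        omega
      rcases Nat.lt_or_ge x.val y.val with hij | hij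
      · exact H.central_case hxf hyf hij h2 h3 h4
      · have hij' : y.val < x.val := by
          rcases Nat.eq_or_lt_of_le hij with h | h
          · exact absurd (val_inj h.symm) hxy
          · exact h
        obtain ⟨g2, g3, g4⟩ := H.swap_diag_data h2 h3 h4
        rw [Sym2.eq_swap]
        exact H.central_case hyf hxf hij' g2 g3 g4
    · -- y is in a fan
      obtain ⟨g2, g3, g4⟩ := H.swap_diag_data h2 h3 h4
      rw [Sym2.eq_swap]
      exact H.fan_case hTS hncr (by rw [Sym2.eq_swap]; exact hp) hyf g2 g3 g4
  · exact H.fan_case hTS hncr hp hxf h2 h3 h4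

lemma mod_inv_lemma {b μ : ℕ} (hb : b < r) (hμ : μ < r) :
    ((b + μ) % r + (r - μ)) % r = b := by
  have hr0 : 0 < r := H.hr1
  rcases Nat.lt_or_ge (b + μ) r with h | h
  · rw [Nat.mod_eq_of_lt h]
    have : b + μ + (r - μ) = b + r := by omega
    rw [this, Nat.add_mod_right, Nat.mod_eq_of_lt hb]
  · have h5 : (b + μ) % r = b + μ - r := by
      rw [Nat.mod_eq_sub_mod h, Nat.mod_eq_of_lt (by omega)]
    rw [h5]
    have h6 : b + μ - r + (r - μ) = b := by omega
    rw [h6, Nat.mod_eq_of_lt hb]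

section Rot
variable {k0 : ℕ} (hck : c ∣ k0)

/-- the rotation amount is congruent to `μ*c` with `μ = (k0/c) % r`. -/
lemma k0_cast (hck : c ∣ k0) :
    ((k0 : ℕ) : ZMod N) = (((k0 / c) % r * c : ℕ) : ZMod N) := by
  set j := k0 / c with hj
  have h1 : j * c = k0 := Nat.div_mul_cancel hck
  have h3 : k0 = N * (j / r) + j % r * c := by
    have h2 : j = r * (j / r) + j % r := (Nat.div_add_mod _ _).symm
    calc k0 = j * c := h1.symm
    _ = (r * (j / r) + j % r) * c := by rw [← h2]
    _ = (r * c) * (j / r) + j % r * c := by ring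
    _ = N * (j / r) + j % r * c := by rw [← H.hNrc]
  rw [h3]
  push_cast
  rw [ZMod.natCast_self]
  ring

lemma shift_eq (hck : c ∣ k0) (m : ℕ) :
    ((m : ℕ) : ZMod N) - ((k0 : ℕ) : ZMod N)
      = ((m + (r - (k0 / c) % r) * c : ℕ) : ZMod N) := by
  set μ := (k0 / c) % r with hμ
  have hμr : μ < r := Nat.mod_lt _ H.hr1
  have hμc : μ * c ≤ N := by
    rw [H.hNrc]
    exact Nat.mul_le_mul_right c (by omega)
  rw [H.k0_cast hck, ← hμ, sub_cast hμc]
  congr 1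
  have h1 : (r - μ) * c = r * c - μ * c := Nat.sub_mul r μ c
  have h2 : μ * c ≤ r * c := Nat.mul_le_mul_right c (by omega)
  rw [H.hNrc]
  omega

lemma rot_chord (hck : c ∣ k0) {b t : ℕ} (hb : b < r) :
    rot N k0 (chordC N c s d b t)
      = chordC N c s d ((b + (r - (k0 / c) % r)) % r) t := by
  set μ := (k0 / c) % r with hμ
  have hμr : μ < r := Nat.mod_lt _ H.hr1
  rw [chordC, rot, Sym2.map_pair_eq, chordC]
  have key : ∀ w : ℕ, ((Avtx c s b + w : ℕ) : ZMod N) - ((k0 : ℕ) : ZMod N)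
      = ((Avtx c s ((b + (r - μ)) % r) + w : ℕ) : ZMod N) := by
    intro w
    rw [H.shift_eq hck, ← hμ]
    rw [ZMod.natCast_eq_natCast_iff]
    have h1 : Avtx c s b + w + (r - μ) * c = (b + (r - μ)) * c + (s - 1) + w := by
      unfold Avtx; ring
    rw [h1]
    have h2 : (b + (r - μ)) * c ≡ (b + (r - μ)) % r * c [MOD N] := by
      rw [H.hNrc]
      exact Nat.ModEq.mul_right' c ((Nat.mod_modEq _ r).symm)
    have h3 := (h2.add_right ((s - 1) + w))
    unfold Avtx
    calc (b + (r - μ)) * c + (s - 1) + w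
        = (b + (r - μ)) * c + ((s - 1) + w) := by ring
    _ ≡ (b + (r - μ)) % r * c + ((s - 1) + w) [MOD N] := h3
    _ = (b + (r - μ)) % r * c + (s - 1) + w := by ring
  have k1 := key 0
  simp only [Nat.add_zero] at k1
  rw [k1, key ((d-1)*t + 1)]

lemma rot_TT (hck : c ∣ k0) :
    rot N k0 '' TTC N c s d r qq = TTC N c s d r qq := by
  set μ := (k0 / c) % r with hμ
  have hμr : μ < r := Nat.mod_lt _ H.hr1
  apply Set.eq_of_subset_of_subset
  · rintro p ⟨q, ⟨b, t, hb, ht1, ht, rfl⟩, rfl⟩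
    rw [H.rot_chord hck hb]
    exact ⟨_, t, Nat.mod_lt _ H.hr1, ht1, ht, rfl⟩
  · rintro p ⟨b, t, hb, ht1, ht, rfl⟩
    refine ⟨chordC N c s d ((b + μ) % r) t, ⟨_, t, Nat.mod_lt _ H.hr1, ht1, ht, rfl⟩, ?_⟩
    rw [H.rot_chord hck (Nat.mod_lt _ H.hr1), ← hμ]
    congr 1
    exact H.mod_inv_lemma hb hμr

lemma GG_shift (hck : c ∣ k0) :
    Finset.image (fun x => x - ((k0 : ℕ) : ZMod N)) (GGC N c s) = GGC N c s := by
  set μ := (k0 / c) % r with hμ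
  have hμr : μ < r := Nat.mod_lt _ H.hr1
  apply Finset.eq_of_subset_of_card_le
  · intro z hz
    obtain ⟨x, hx, rfl⟩ := Finset.mem_image.mp hz
    have h1 : x - ((k0 : ℕ) : ZMod N) = ((x.val + (r - μ) * c : ℕ) : ZMod N) := by
      conv_lhs => rw [← cast_val x]
      rw [H.shift_eq hck, ← hμ]
    rw [H.GG_mem, h1, ZMod.val_natCast]
    have h2 : ∀ m : ℕ, m % N % c = m % c := by
      intro m
      rw [H.hNrc]
      exact Nat.mod_mul_left_mod m r c
    rw [h2, Nat.add_mul_mod_self_right]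
    exact (H.GG_mem).mp hx
  · rw [Finset.card_image_of_injective _ sub_left_injective]

end Rot
end CH

lemma rdvd {N k0 m : ℕ} (hN : 0 < N) (h : N ∣ k0 * m) : (N / N.gcd k0) ∣ m := by
  set g := N.gcd k0 with hg
  have hgpos : 0 < g := Nat.gcd_pos_of_pos_left _ hN
  have h1 : g ∣ N := Nat.gcd_dvd_left _ _
  have h2 : g ∣ k0 := Nat.gcd_dvd_right _ _
  have hco : Nat.Coprime (N / g) (k0 / g) := Nat.coprime_div_gcd_div_gcd hgpos
  have h3 : g * (N / g) ∣ g * ((k0 / g) * m) := by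
    have e1 : g * (N / g) = N := Nat.mul_div_cancel' h1
    have e2 : g * ((k0 / g) * m) = k0 * m := by
      rw [← Nat.mul_assoc, Nat.mul_div_cancel' h2]
    rw [e1, e2]
    exact h
  have h4 : (N / g) ∣ (k0 / g) * m := (Nat.mul_dvd_mul_iff_left hgpos).mp h3
  exact hco.dvd_of_dvd_mul_left h4


/-- For d >= 2, l >= 2, n >= 1 and N = (d-1)l + 2, there exist a
(d+1)-angulation T of the N-gon and a (d+1)-angle G of T with rho^(n(d-1))(T) = T
and rho^(n(d-1))(G) = G, iff N divides n*gcd(d+1, 2(l-1)). -/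
theorem invariant_angle_rot_iff (d ℓ n N : ℕ) (hd : 2 ≤ d) (hl : 2 ≤ ℓ) (hn : 1 ≤ n)
    (hN : N = (d - 1) * ℓ + 2) :
    (∃ (T : Set (Sym2 (ZMod N))) (G : Finset (ZMod N)),
        IsAngulation d N T ∧ IsAngle d N T G ∧
        rot N (n * (d - 1)) '' T = T ∧
        Finset.image (fun x => x - ((n * (d - 1) : ℕ) : ZMod N)) G = G) ↔
      N ∣ n * Nat.gcd (d + 1) (2 * (ℓ - 1)) := by
  haveI : NeZero N := ⟨by omega⟩
  constructor
  · rintro ⟨T, G, hang, hangle, hTinv, hGinv⟩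
    exact (NT_iff d ℓ n N hd hl hN).mp
      (forward_div d ℓ n N hd hl hn hN T G hang.1 hangle hGinv)
  · intro hdvd
    set k0 := n * (d - 1) with hk0
    have hN0 : 0 < N := by omega
    set g := N.gcd k0 with hg
    have hgpos : 0 < g := Nat.gcd_pos_of_pos_left _ hN0
    set r := N / g with hr
    set s := (d + 1) / r with hs
    set qq := (ℓ - 1) / r with hqq
    have hA : N ∣ n * (d + 1) :=
      dvd_trans hdvd (Nat.mul_dvd_mul_left n (Nat.gcd_dvd_left _ _))
    have hD : N ∣ n * (d-1) * (ℓ-1) := (NT_iff d ℓ n N hd hl hN).mpr hdvd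
    have hrd : r ∣ d + 1 := by
      apply rdvd hN0
      have he : k0 * (d+1) = (n * (d+1)) * (d-1) := by rw [hk0]; ring
      rw [he]
      exact Dvd.dvd.mul_right hA _
    have hrl : r ∣ ℓ - 1 := by
      apply rdvd hN0
      have he : k0 * (ℓ-1) = n * (d-1) * (ℓ-1) := by rw [hk0]
      rw [he]
      exact hD
    have hr1 : 1 ≤ r :=
      Nat.div_pos (Nat.le_of_dvd hN0 (Nat.gcd_dvd_left _ _)) hgpos
    have hrs : r * s = d + 1 := Nat.mul_div_cancel' hrd
    have hrq : r * qq = ℓ - 1 := Nat.mul_div_cancel' hrl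
    have hs1 : 1 ≤ s := by
      rcases Nat.eq_zero_or_pos s with h | h
      · rw [h, Nat.mul_zero] at hrs; omega
      · exact h
    have hq1 : 1 ≤ qq := by
      rcases Nat.eq_zero_or_pos qq with h | h
      · rw [h, Nat.mul_zero] at hrq; omega
      · exact h
    set c := g with hc
    have hNrc : N = r * c := (Nat.div_mul_cancel (Nat.gcd_dvd_left _ _)).symm
    have hNid : N = (d-1)*(ℓ-1) + (d+1) := by
      have hl1 : ℓ - 1 + 1 = ℓ := by omega
      have e : (d-1) * ℓ = (d-1)*(ℓ-1) + (d-1) := by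
        calc (d-1) * ℓ = (d-1) * ((ℓ-1)+1) := by rw [hl1]
        _ = (d-1)*(ℓ-1) + (d-1) := by ring
      omega
    have hcs : c = s + (d-1)*qq := by
      have h1 : r * (s + (d-1)*qq) = r*s + (d-1)*(r*qq) := by ring
      have h2 : r * (s + (d-1)*qq) = r * c := by
        rw [h1, hrs, hrq, ← hNrc]
        omega
      exact (Nat.eq_of_mul_eq_mul_left (by omega) h2).symm ▸ rfl
    have H : CH N c r s qq d := ⟨hd, hs1, hq1, hr1, hcs, hNrc, hrs⟩
    have hck : c ∣ k0 := Nat.gcd_dvd_right _ _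
    refine ⟨TTC N c s d r qq, GGC N c s, ⟨?_, ?_, H.TT_max⟩, H.GG_isangle,
      H.rot_TT hck, H.GG_shift hck⟩
    · rintro p ⟨b, t, hb, ht1, ht, rfl⟩
      exact H.chord_isdiag hb ht1 ht
    · rintro p ⟨b, t, hb, ht1, ht, rfl⟩ p' ⟨b', t', hb', ht1', ht', rfl⟩
      exact H.chord_noncross hb ht1 ht hb' ht1' ht'
end

section
/- Fix integers d ≥ 2, ℓ ≥ 2 and n ≥ 1, and set N = (d−1)ℓ + 2. Suppose N is even and 𝒯 is a (d+1)-angulation of P_N with ρ^{n(d−1)}(𝒯) = 𝒯 that contains a diameter, i.e. a (d−1)-diagonal of the form {x, x + N/2}. Then N divides 2n. -/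
/-- For d >= 2, l >= 2, n >= 1 and N = (d-1)l + 2 even, if T is a
(d+1)-angulation of the N-gon with rho^(n(d-1))(T) = T containing a diameter
{x, x + N/2}, then N divides 2n. -/
theorem N_dvd_of_invariant_diameter (d ℓ n N : ℕ) (hd : 2 ≤ d) (hl : 2 ≤ ℓ) (hn : 1 ≤ n)
    (hN : N = (d - 1) * ℓ + 2) (hNe : Even N)
    (T : Set (Sym2 (ZMod N))) (hT : IsAngulation d N T)
    (hinv : rot N (n * (d - 1)) '' T = T)
    (hdiam : ∃ x : ZMod N, s(x, x + ((N / 2 : ℕ) : ZMod N)) ∈ T) :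
    N ∣ 2 * n := by
  obtain ⟨x, hx⟩ := hdiam
  have hmul : 2 ≤ (d - 1) * ℓ := le_trans hl (Nat.le_mul_of_pos_left ℓ (by omega))
  have hN4 : 4 ≤ N := by omega
  haveI : NeZero N := ⟨by omega⟩
  obtain ⟨r, hr⟩ := hNe
  set m : ℕ := N / 2 with hmdef
  have hNm : N = 2 * m := by omega
  have hm2 : 2 ≤ m := by omega
  set M : ZMod N := (m : ZMod N) with hM
  have hMval : M.val = m := ZMod.val_natCast_of_lt (by omega)
  have hMM : M + M = 0 := by
    rw [hM, ← Nat.cast_add, show m + m = N by omega, ZMod.natCast_self]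
  have hnegM : -M = M := neg_eq_of_add_eq_zero_left hMM
  -- Step 1: the diameter is a diagonal, so (d-1) ∣ m - 1
  obtain ⟨a, b, hab, _, _, hdvd⟩ := hT.1 _ hx
  have hba : b - a = M := by
    rcases Sym2.eq_iff.mp hab with ⟨h1, h2⟩ | ⟨h1, h2⟩
    · rw [← h1, ← h2]; ring
    · rw [← h1, ← h2, show x - (x + M) = -M by ring, hnegM]
  have hdm : (d - 1) ∣ (m - 1) := by rwa [hba, hMval] at hdvd
  -- Step 2: the rotated diameter is in T
  set knat : ℕ := n * (d - 1) with hknat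
  set K : ZMod N := (knat : ZMod N) with hK
  have hx' : rot N knat s(x, x + M) ∈ T := by
    rw [← hinv]; exact Set.mem_image_of_mem _ hx
  have hrot : rot N knat s(x, x + M) = s(x - K, x + M - K) := by
    simp [rot, Sym2.map_pair_eq, hK]
  have hnc := hT.2.1 _ hx _ hx'
  set t : ℕ := (-K).val with ht
  have htN : t < N := ZMod.val_lt _
  -- Step 3: m ∣ knat
  have hmk : m ∣ knat := by
    rcases Nat.lt_trichotomy t m with h | h | h
    · rcases Nat.eq_zero_or_pos t with h0 | h0
      · have hK0 : K = 0 := by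
          have h1 : -K = 0 := by
            have := h0
            rw [ht, ZMod.val_eq_zero] at this
            exact this
          rwa [neg_eq_zero] at h1
        have hmod : knat ≡ 0 [MOD N] := by
          have : (knat : ZMod N) = ((0 : ℕ) : ZMod N) := by rw [← hK, hK0]; simp
          exact (ZMod.natCast_eq_natCast_iff _ _ _).mp this
        exact dvd_trans ⟨2, by omega⟩ ((Nat.modEq_zero_iff_dvd).mp hmod)
      · exfalso
        apply hnc
        refine ⟨x, x + M, x - K, x + M - K, rfl, hrot, ?_, ?_⟩
        · refine ⟨?_, ?_⟩
          · rw [show x - K - x = -K by ring]; omega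
          · rw [show x - K - x = -K by ring, show x + M - x = M by ring, hMval]; omega
        · refine ⟨?_, ?_⟩
          · rw [show x + M - K - (x + M) = -K by ring]; omega
          · rw [show x + M - K - (x + M) = -K by ring, show x - (x + M) = -M by ring,
              hnegM, hMval]; omega
    · have hKM : K = M := by
        have h1 : -K = M := ZMod.val_injective _ (by rw [hMval, ← ht]; omega)
        rw [← hnegM, ← h1, neg_neg]
      have hmod : knat ≡ m [MOD N] := by
        have : (knat : ZMod N) = (m : ZMod N) := by rw [← hK, ← hM, hKM]
        exact (ZMod.natCast_eq_natCast_iff _ _ _).mp this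
      have h2 : knat ≡ m [MOD m] := hmod.of_dvd ⟨2, by omega⟩
      have h3 : knat % m = 0 := by
        have := h2
        unfold Nat.ModEq at this
        simpa [Nat.mod_self] using this
      exact Nat.dvd_of_mod_eq_zero h3
    · exfalso
      have hval : (M + -K).val = m + t - N := by
        rw [ZMod.val_add, hMval, ← ht, Nat.mod_eq_sub_mod (by omega)]
        exact Nat.mod_eq_of_lt (by omega)
      apply hnc
      refine ⟨x, x + M, x + M - K, x - K, rfl, hrot.trans (Sym2.eq_swap), ?_, ?_⟩
      · refine ⟨?_, ?_⟩
        · rw [show x + M - K - x = M + -K by ring, hval]; omega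
        · rw [show x + M - K - x = M + -K by ring, hval, show x + M - x = M by ring,
            hMval]; omega
      · refine ⟨?_, ?_⟩
        · rw [show x - K - (x + M) = -M + -K by ring, hnegM, hval]; omega
        · rw [show x - K - (x + M) = -M + -K by ring, hnegM, hval,
            show x - (x + M) = -M by ring, hnegM, hMval]; omega
  -- Step 4: coprimality and conclusion
  have hcop : Nat.Coprime m (d - 1) := by
    have h1 : Nat.gcd m (d - 1) ∣ m - 1 := dvd_trans (Nat.gcd_dvd_right _ _) hdm
    have h2 : Nat.gcd m (d - 1) ∣ m := Nat.gcd_dvd_left _ _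
    have h3 : Nat.gcd m (d - 1) ∣ 1 := by
      have h4 := Nat.dvd_sub h2 h1
      rwa [show m - (m - 1) = 1 by omega] at h4
    exact Nat.dvd_one.mp h3
  have hmn : m ∣ n := hcop.dvd_of_dvd_mul_right hmk
  rw [hNm]
  exact mul_dvd_mul_left 2 hmn
end
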